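/- Let d ≥ 1, let w : Fin d → ℝ, let p_w k = exp (w k) / ∑_j exp (w j) be the softmax distribution, and suppose there exists δ > 0 with p_w k ≥ δ for every k. Then for every u : Fin d → ℝ, the Hessian quadratic form of Φ(w) = log (∑_k exp (w k)) at w in direction u satisfies (∑_k p_w k * (u k)²) − (∑_k p_w k * u k)² ≥ δ * ∑_k (u k − ū)², where ū = (∑_k u k) / d is the arithmetic mean of u. -/
import Mathlib


open Real Finset

/-- Strong-convexity lower bound for the log-partition function: if every softmax
probability `p_w k = exp (w k) / ∑ j, exp (w j)` is at least `δ > 0`, then the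
Hessian quadratic form of `Φ w = log ∑ k, exp (w k)` in direction `u`, i.e. the
softmax variance of `u`, is at least `δ * ∑ k, (u k - ū)^2` where `ū` is the
arithmetic mean of `u`. -/
theorem logSumExp_strong_convexity (d : ℕ) (hd : 1 ≤ d)
    (w : Fin d → ℝ) (δ : ℝ) (hδ : 0 < δ)
    (hp : ∀ k, δ ≤ Real.exp (w k) / ∑ j, Real.exp (w j))
    (u : Fin d → ℝ) :
    δ * ∑ k, (u k - (∑ j, u j) / d) ^ 2 ≤
      (∑ k, (Real.exp (w k) / ∑ j, Real.exp (w j)) * (u k) ^ 2)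
        - (∑ k, (Real.exp (w k) / ∑ j, Real.exp (w j)) * u k) ^ 2 := by
  have hdpos : (0:ℝ) < d := by exact_mod_cast hd
  set S := ∑ j, Real.exp (w j) with hS_def
  have hS : 0 < S := Finset.sum_pos (fun i _ => Real.exp_pos _)
    ⟨⟨0, hd⟩, Finset.mem_univ _⟩
  set p : Fin d → ℝ := fun k => Real.exp (w k) / S with hp_def
  have hsum : ∑ k, p k = 1 := by
    rw [hp_def]
    rw [← Finset.sum_div, ← hS_def, div_self hS.ne']
  set m := ∑ k, p k * u k with hm
  set ub := (∑ j, u j) / (d:ℝ) with hub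
  have hsumu : ∑ j, u j = (d:ℝ) * ub := by
    rw [hub]; field_simp
  have hcard : (Finset.univ : Finset (Fin d)).card = d := by simp
  -- variance identity
  have h1 : ∑ k, p k * (u k - m)^2 = (∑ k, p k * u k ^ 2) - m ^ 2 := by
    have : ∀ k ∈ Finset.univ, p k * (u k - m)^2
        = p k * u k ^ 2 - 2 * m * (p k * u k) + m ^ 2 * p k := by
      intro k _; ring
    rw [Finset.sum_congr rfl this, Finset.sum_add_distrib, Finset.sum_sub_distrib,
      ← Finset.mul_sum, ← Finset.mul_sum, hsum, ← hm]
    ring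
  -- mean minimizes squared deviations
  have h2 : ∑ k, (u k - ub)^2 ≤ ∑ k, (u k - m)^2 := by
    have key : ∑ k, (u k - m)^2
        = ∑ k, (u k - ub)^2 + (d:ℝ) * (ub - m)^2 := by
      have : ∀ k ∈ Finset.univ, (u k - m)^2
          = (u k - ub)^2 + ((ub - m) * (2 * u k) - (ub - m) * (m + ub)) := by
        intro k _; ring
      rw [Finset.sum_congr rfl this, Finset.sum_add_distrib, Finset.sum_sub_distrib,
        ← Finset.mul_sum, ← Finset.mul_sum, Finset.sum_const, hcard, hsumu]
      ring
    rw [key]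
    nlinarith [sq_nonneg (ub - m), hdpos]
  -- pointwise lower bound
  have h3 : δ * ∑ k, (u k - m)^2 ≤ ∑ k, p k * (u k - m)^2 := by
    rw [Finset.mul_sum]
    refine Finset.sum_le_sum fun k _ => ?_
    exact mul_le_mul_of_nonneg_right (hp k) (sq_nonneg _)
  calc δ * ∑ k, (u k - ub)^2 ≤ δ * ∑ k, (u k - m)^2 := by
        exact mul_le_mul_of_nonneg_left h2 hδ.le
    _ ≤ ∑ k, p k * (u k - m)^2 := h3
    _ = (∑ k, p k * u k ^ 2) - m ^ 2 := h1
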